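/- Let u : ℝ² → ℝ be a locally Lipschitz viscosity solution of the Lorentzian eikonal equation g(∇u,∇u) = −1 on the 2-dimensional Minkowski space-time with past-directed time orientation (∂u/∂x(p) > 0 at every point p where u is differentiable). Suppose p ∈ ℝ², T > 0, and v = (v₁, v₂) ∈ ℝ² with v₁ = √(1 + v₂²) satisfy u(p + t·v) = u(p) + t for all t ∈ [0, T]. Then for every t ∈ (0, T), u is differentiable at p + t·v with ∂u/∂x(p + t·v) = v₁ and ∂u/∂y(p + t·v) = −v₂ (i.e. the Lorentzian gradient satisfies ∇u(p + t·v) = −v). -/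

import Mathlib

open Filter Topology Set MeasureTheory intervalIntegral



/-- `u` is a viscosity solution of the Lorentzian eikonal equation
`g(∇u,∇u) = -1` on the open set `O` in 2-dimensional Minkowski space-time
(metric `-dx² + dy²`): for every upper test function `φ` at `p ∈ O`,
`(∂φ/∂x(p))² - (∂φ/∂y(p))² ≥ 1`, and for every lower test function `φ` at `p`,
`(∂φ/∂x(p))² - (∂φ/∂y(p))² ≤ 1`. -/
def IsViscositySolution (u : ℝ × ℝ → ℝ) (O : Set (ℝ × ℝ)) : Prop :=
  (∀ p ∈ O, ∀ φ : ℝ × ℝ → ℝ, ∀ U : Set (ℝ × ℝ),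
      IsOpen U → p ∈ U → U ⊆ O → ContDiffOn ℝ 1 φ U → φ p = u p →
      (∀ x ∈ U, u x ≤ φ x) →
      1 ≤ (fderiv ℝ φ p (1, 0)) ^ 2 - (fderiv ℝ φ p (0, 1)) ^ 2) ∧
  (∀ p ∈ O, ∀ φ : ℝ × ℝ → ℝ, ∀ U : Set (ℝ × ℝ),
      IsOpen U → p ∈ U → U ⊆ O → ContDiffOn ℝ 1 φ U → φ p = u p →
      (∀ x ∈ U, φ x ≤ u x) →
      (fderiv ℝ φ p (1, 0)) ^ 2 - (fderiv ℝ φ p (0, 1)) ^ 2 ≤ 1)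





/- ### Auxiliary lemmas -/

set_option linter.unusedVariables false

lemma ae_ae_line (N : Set (ℝ×ℝ)) (hNm : MeasurableSet N) (hN0 : volume N = 0) (h : ℝ×ℝ) :
    ∀ᵐ z : ℝ×ℝ, ∀ᵐ s : ℝ, z + s • h ∉ N := by
  set μ : Measure (ℝ×ℝ) := volume
  set ν : Measure ℝ := volume
  have hmap : Measurable (fun p : (ℝ×ℝ)×ℝ => p.1 + p.2 • h) := by fun_prop
  have hS : MeasurableSet ((fun p : (ℝ×ℝ)×ℝ => p.1 + p.2 • h) ⁻¹' N) := hmap hNm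
  have hzero : (μ.prod ν) ((fun p : (ℝ×ℝ)×ℝ => p.1 + p.2 • h) ⁻¹' N) = 0 := by
    rw [Measure.prod_apply_symm hS]
    have : ∀ s : ℝ, μ ((fun z : ℝ×ℝ => (z, s)) ⁻¹' ((fun p : (ℝ×ℝ)×ℝ => p.1 + p.2 • h) ⁻¹' N)) = 0 := by
      intro s
      have : ((fun z : ℝ×ℝ => (z, s)) ⁻¹' ((fun p : (ℝ×ℝ)×ℝ => p.1 + p.2 • h) ⁻¹' N))
          = (fun z : ℝ×ℝ => z + s • h) ⁻¹' N := rfl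
      rw [this, measure_preimage_add_right]
      exact hN0
    simp [this]
  have : ∀ᵐ p ∂(μ.prod ν), p.1 + p.2 • h ∉ N := by
    rw [ae_iff]
    simp only [not_not]; exact hzero
  exact Measure.ae_ae_of_ae_prod this

lemma one_dim (g : ℝ → ℝ) (hgc : Continuous g) (L : NNReal)
    (hg : LipschitzOnWith L g (Set.Icc (0:ℝ) 2)) (c : ℝ)
    (hd : ∀ᵐ s : ℝ, s ∈ Set.Ioo (0:ℝ) 1 → DifferentiableAt ℝ g s ∧ c ≤ deriv g s) :
    c ≤ g 1 - g 0 := by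
  set δ : ℕ → ℝ := fun n => 1/(n+1) with hδ
  have hδpos : ∀ n, 0 < δ n := fun n => by positivity
  have hδle : ∀ n, δ n ≤ 1 := fun n => by
    rw [hδ, div_le_one (by positivity)]; linarith [Nat.cast_nonneg (α := ℝ) n]
  have hδ0 : Tendsto δ atTop (𝓝 0) := tendsto_one_div_add_atTop_nhds_zero_nat
  set I : ℕ → ℝ := fun n => ∫ s in (0:ℝ)..1, (g (s + δ n) - g s)/(δ n) with hI
  have intg : ∀ a b : ℝ, IntervalIntegrable g volume a b :=
    fun a b => hgc.intervalIntegrable a b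
  have lipb : ∀ x ∈ Set.Icc (0:ℝ) 2, ∀ y ∈ Set.Icc (0:ℝ) 2, |g x - g y| ≤ L * |x - y| := by
    intro x hx y hy
    have := hg.dist_le_mul x hx y hy
    simpa [Real.dist_eq] using this
  -- step 1: |I n - (g 1 - g 0)| ≤ 2 L δ n
  have key1 : ∀ n, |I n - (g 1 - g 0)| ≤ 2 * L * δ n := by
    intro n
    set d := δ n with hdd
    have hd0 : 0 < d := hδpos n
    have hd1 : d ≤ 1 := hδle n
    have intsh : IntervalIntegrable (fun s => g (s + d)) volume 0 1 :=
      (hgc.comp (continuous_id.add continuous_const)).intervalIntegrable 0 1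
    have e2 : I n = ((∫ s in (1:ℝ)..(1+d), g s) - ∫ s in (0:ℝ)..d, g s)/d := by
      have e1 : (∫ s in (0:ℝ)..1, g (s + d)) = ∫ s in d..(1+d), g s := by
        simpa [add_comm] using intervalIntegral.integral_comp_add_right (a := (0:ℝ)) (b := 1) g d
      have e3 : (∫ s in (0:ℝ)..1, (g (s + d) - g s)/d)
          = ((∫ s in (0:ℝ)..1, g (s + d)) - ∫ s in (0:ℝ)..1, g s)/d := by
        rw [intervalIntegral.integral_div, intervalIntegral.integral_sub intsh (intg 0 1)]
      have e4 : (∫ s in d..(1+d), g s) - ∫ s in (0:ℝ)..1, g s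
          = (∫ s in (1:ℝ)..(1+d), g s) - ∫ s in (0:ℝ)..d, g s := by
        have h1 : (∫ s in (0:ℝ)..d, g s) + ∫ s in d..(1+d), g s = ∫ s in (0:ℝ)..(1+d), g s :=
          intervalIntegral.integral_add_adjacent_intervals (intg 0 d) (intg d (1+d))
        have h2 : (∫ s in (0:ℝ)..1, g s) + ∫ s in (1:ℝ)..(1+d), g s = ∫ s in (0:ℝ)..(1+d), g s :=
          intervalIntegral.integral_add_adjacent_intervals (intg 0 1) (intg 1 (1+d))
        linarith
      show (∫ s in (0:ℝ)..1, (g (s + d) - g s)/d) = _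
      rw [e3, e1, e4]
    have b1 : |(∫ s in (1:ℝ)..(1+d), g s) - d * g 1| ≤ L * d * d := by
      have : (∫ s in (1:ℝ)..(1+d), g s) - d * g 1 = ∫ s in (1:ℝ)..(1+d), (g s - g 1) := by
        rw [intervalIntegral.integral_sub (intg 1 (1+d)) (intervalIntegrable_const)]
        simp
      rw [this]
      have := intervalIntegral.norm_integral_le_of_norm_le_const (C := L * d)
        (f := fun s => g s - g 1) (a := 1) (b := 1+d) ?_
      · simpa [abs_of_pos hd0] using this
      · intro x hx
        rw [Set.uIoc_of_le (by linarith)] at hx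
        have hx1 : (1:ℝ) < x := hx.1
        have hx2 : x ≤ 1 + d := hx.2
        have : |g x - g 1| ≤ L * |x - 1| :=
          lipb x ⟨by linarith, by linarith⟩ 1 ⟨by norm_num, by norm_num⟩
        rw [Real.norm_eq_abs]
        refine this.trans ?_
        have : |x - (1:ℝ)| ≤ d := by rw [abs_of_pos (by linarith)]; linarith
        nlinarith [L.coe_nonneg]
    have b2 : |(∫ s in (0:ℝ)..d, g s) - d * g 0| ≤ L * d * d := by
      have : (∫ s in (0:ℝ)..d, g s) - d * g 0 = ∫ s in (0:ℝ)..d, (g s - g 0) := by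
        rw [intervalIntegral.integral_sub (intg 0 d) (intervalIntegrable_const)]
        simp
      rw [this]
      have := intervalIntegral.norm_integral_le_of_norm_le_const (C := L * d)
        (f := fun s => g s - g 0) (a := 0) (b := d) ?_
      · simpa [abs_of_pos hd0] using this
      · intro x hx
        rw [Set.uIoc_of_le (by linarith)] at hx
        have hx1 : (0:ℝ) < x := hx.1
        have hx2 : x ≤ d := hx.2
        have : |g x - g 0| ≤ L * |x - 0| :=
          lipb x ⟨by linarith, by linarith⟩ 0 ⟨le_refl 0, by norm_num⟩
        rw [Real.norm_eq_abs]
        refine this.trans ?_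
        have : |x - (0:ℝ)| ≤ d := by rw [abs_of_pos (by linarith)]; linarith
        nlinarith [L.coe_nonneg]
    have : I n - (g 1 - g 0) = (((∫ s in (1:ℝ)..(1+d), g s) - d * g 1)
        - ((∫ s in (0:ℝ)..d, g s) - d * g 0))/d := by
      rw [e2]; field_simp; ring
    rw [this]
    rw [abs_div, abs_of_pos hd0, div_le_iff₀ hd0]
    calc |((∫ s in (1:ℝ)..(1+d), g s) - d * g 1) - ((∫ s in (0:ℝ)..d, g s) - d * g 0)|
        ≤ |(∫ s in (1:ℝ)..(1+d), g s) - d * g 1| + |(∫ s in (0:ℝ)..d, g s) - d * g 0| :=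
          abs_sub _ _
      _ ≤ L * d * d + L * d * d := add_le_add b1 b2
      _ = 2 * L * d * d := by ring
  -- derivative bound at interior differentiability points
  have derivbound : ∀ s ∈ Set.Ioo (0:ℝ) 1, DifferentiableAt ℝ g s → |deriv g s| ≤ L := by
    intro s hs hdiff
    have hslope : Tendsto (slope g s) (𝓝[≠] s) (𝓝 (deriv g s)) :=
      hasDerivAt_iff_tendsto_slope.1 hdiff.hasDerivAt
    have habs : Tendsto (fun y => |slope g s y|) (𝓝[≠] s) (𝓝 |deriv g s|) :=
      hslope.abs
    have hev : ∀ᶠ y in 𝓝[≠] s, |slope g s y| ≤ L := by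
      have hIoo : Set.Ioo (0:ℝ) 1 ∈ 𝓝[≠] s :=
        nhdsWithin_le_nhds (isOpen_Ioo.mem_nhds hs)
      have hne : {y : ℝ | y ≠ s} ∈ 𝓝[≠] s := self_mem_nhdsWithin
      filter_upwards [hIoo, hne] with y hy hyne
      rw [slope_def_field, div_eq_inv_mul, abs_mul, abs_inv]
      rw [inv_mul_le_iff₀ (abs_pos.2 (sub_ne_zero.2 hyne))]
      have := lipb y ⟨by linarith [hy.1], by linarith [hy.2]⟩ s
        ⟨by linarith [hs.1], by linarith [hs.2]⟩
      calc |g y - g s| ≤ L * |y - s| := this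
        _ = |y - s| * L := by ring
    exact le_of_tendsto habs hev
  -- integrability of deriv g on [0,1]
  have hmeas : AEStronglyMeasurable (deriv g) (volume.restrict (Set.uIoc (0:ℝ) 1)) :=
    (measurable_deriv g).aestronglyMeasurable
  have ae01 : ∀ᵐ s : ℝ, s ∉ ({0, 1} : Set ℝ) := by
    apply measure_eq_zero_iff_ae_notMem.1
    exact (Set.toFinite ({0, 1} : Set ℝ)).measure_zero volume
  have aeI : ∀ᵐ s : ℝ, s ∈ Set.Ioc (0:ℝ) 1 → s ∈ Set.Ioo (0:ℝ) 1 := by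
    filter_upwards [ae01] with s hs1 hs
    refine ⟨hs.1, lt_of_le_of_ne hs.2 fun h => hs1 (by simp [h])⟩
  have intderiv : IntervalIntegrable (deriv g) volume 0 1 := by
    rw [intervalIntegrable_iff]
    apply Integrable.mono' (integrableOn_const (C := (L:ℝ)) (by simp [Set.uIoc_of_le (by norm_num : (0:ℝ) ≤ 1)]))
    · exact hmeas
    · rw [Set.uIoc_of_le (by norm_num : (0:ℝ) ≤ 1)]
      rw [ae_restrict_iff' measurableSet_Ioc]
      filter_upwards [hd, aeI] with s hs hsI hsIoc
      have hsIoo := hsI hsIoc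
      rcases hs hsIoo with ⟨hdiff, _⟩
      simpa [Real.norm_eq_abs] using derivbound s hsIoo hdiff
  -- step 2 : DCT
  have key2 : Tendsto I atTop (𝓝 (∫ s in (0:ℝ)..1, deriv g s)) := by
    apply intervalIntegral.tendsto_integral_filter_of_dominated_convergence (bound := fun _ => (L:ℝ))
    · apply Eventually.of_forall
      intro n
      apply ContinuousOn.aestronglyMeasurable _ measurableSet_uIoc
      apply Continuous.continuousOn
      exact ((hgc.comp (continuous_id.add continuous_const)).sub hgc).div_const _
    · apply Eventually.of_forall
      intro n
      apply Eventually.of_forall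
      intro s hs
      rw [Set.uIoc_of_le (by norm_num : (0:ℝ) ≤ 1)] at hs
      have h1 : s ∈ Set.Icc (0:ℝ) 2 := ⟨le_of_lt hs.1, by linarith [hs.2]⟩
      have h2 : s + δ n ∈ Set.Icc (0:ℝ) 2 := ⟨by linarith [hs.1, (hδpos n).le], by linarith [hs.2, hδle n]⟩
      have := lipb _ h2 _ h1
      rw [Real.norm_eq_abs, abs_div, abs_of_pos (hδpos n), div_le_iff₀ (hδpos n)]
      calc |g (s + δ n) - g s| ≤ L * |s + δ n - s| := this
        _ = L * δ n := by rw [show s + δ n - s = δ n by ring, abs_of_pos (hδpos n)]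
    · exact intervalIntegrable_const
    · rw [Set.uIoc_of_le (by norm_num : (0:ℝ) ≤ 1)]
      filter_upwards [hd, aeI] with s hs hsI hsIoc
      have hsIoo := hsI hsIoc
      rcases hs hsIoo with ⟨hdiff, _⟩
      have hslope : Tendsto (slope g s) (𝓝[≠] s) (𝓝 (deriv g s)) :=
        hasDerivAt_iff_tendsto_slope.1 hdiff.hasDerivAt
      have hseq : Tendsto (fun n => s + δ n) atTop (𝓝[≠] s) := by
        apply tendsto_nhdsWithin_of_tendsto_nhds_of_eventually_within
        · simpa using (tendsto_const_nhds (x := s)).add hδ0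
        · exact Eventually.of_forall fun n => by
            simp only [Set.mem_compl_iff, Set.mem_singleton_iff]
            exact ne_of_gt (by linarith [hδpos n])
      have htt := hslope.comp hseq
      apply htt.congr
      intro n
      simp only [Function.comp_apply, slope_def_field]
      rw [add_sub_cancel_left]
  -- combine
  have key4 : Tendsto I atTop (𝓝 (g 1 - g 0)) := by
    have h2 : Tendsto (fun n => I n - (g 1 - g 0)) atTop (𝓝 0) := by
      apply squeeze_zero_norm (fun n => by simpa [Real.norm_eq_abs] using key1 n)
      have := hδ0.const_mul (2 * (L:ℝ))
      simpa [hδ] using this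
    have := h2.add (tendsto_const_nhds (x := g 1 - g 0))
    simpa using this
  have heq : (∫ s in (0:ℝ)..1, deriv g s) = g 1 - g 0 := tendsto_nhds_unique key2 key4
  rw [← heq]
  have : (c : ℝ) = ∫ _ in (0:ℝ)..1, c := by simp
  rw [this]
  apply intervalIntegral.integral_mono_ae_restrict (by norm_num : (0:ℝ) ≤ 1) intervalIntegrable_const intderiv
  rw [Filter.EventuallyLE, ae_restrict_iff' measurableSet_Icc]
  filter_upwards [hd, ae01] with s hs hs01 hsIcc
  have hsIoo : s ∈ Set.Ioo (0:ℝ) 1 := by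
    constructor
    · exact lt_of_le_of_ne hsIcc.1 fun h => hs01 (by simp [← h])
    · exact lt_of_le_of_ne hsIcc.2 fun h => hs01 (by simp [h])
  exact (hs hsIoo).2

set_option maxHeartbeats 2000000 in
lemma visc_diff_bound (u : ℝ × ℝ → ℝ) (hc : Continuous u)
    (hvisc : IsViscositySolution u Set.univ) (x₀ : ℝ × ℝ)
    (hd : DifferentiableAt ℝ u x₀) :
    1 ≤ (fderiv ℝ u x₀ (1, 0))^2 - (fderiv ℝ u x₀ (0, 1))^2 := by
  set D := fderiv ℝ u x₀ with hD
  set a := D (1, 0) with ha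
  set b := D (0, 1) with hb
  have claim : ∀ ε : ℝ, 0 < ε → ε ≤ 1 →
      ∃ e₁ e₂ : ℝ, |e₁| ≤ ε ∧ |e₂| ≤ ε ∧ 1 ≤ (a + e₁)^2 - (b + e₂)^2 := by
    intro ε hε hε1
    set c : ℝ := ε^2/8 with hcdef
    have hcpos : 0 < c := by positivity
    have hclt : c < 1 := by nlinarith
    have hlo := (hd.hasFDerivAt).isLittleO
    rw [Asymptotics.isLittleO_iff] at hlo
    have hev := hlo hcpos
    rw [Metric.eventually_nhds_iff] at hev
    obtain ⟨r₀, hr₀, hball⟩ := hev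
    set r : ℝ := r₀/2 with hrdef
    have hrpos : 0 < r := by positivity
    have hwb : ∀ x ∈ Metric.closedBall x₀ r, |u x - u x₀ - D (x - x₀)| ≤ c * ‖x - x₀‖ := by
      intro x hx
      have : dist x x₀ < r₀ := lt_of_le_of_lt (Metric.mem_closedBall.1 hx) (by linarith)
      simpa [Real.norm_eq_abs] using hball this
    set Q : ℝ × ℝ → ℝ := fun x =>
      ((x.1 - x₀.1) * (x.1 - x₀.1) + (x.2 - x₀.2) * (x.2 - x₀.2)) * r⁻¹ with hQ
    set G : ℝ × ℝ → ℝ := fun x => u x - (u x₀ + D (x - x₀) + Q x) with hG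
    have hGcont : Continuous G := by fun_prop
    obtain ⟨m, hmcb, hmax⟩ := (isCompact_closedBall x₀ r).exists_isMaxOn
      ⟨x₀, Metric.mem_closedBall_self hrpos.le⟩ hGcont.continuousOn
    have hGx₀ : G x₀ = 0 := by simp [hG, hQ]
    have hGm : 0 ≤ G m := by
      have := hmax (Metric.mem_closedBall_self hrpos.le)
      simp only [Set.mem_setOf_eq] at this
      rw [hGx₀] at this; exact this
    have hnorm1 : |m.1 - x₀.1| ≤ ‖m - x₀‖ := by
      simpa [Real.norm_eq_abs] using norm_fst_le (m - x₀)
    have hnorm2 : |m.2 - x₀.2| ≤ ‖m - x₀‖ := by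
      simpa [Real.norm_eq_abs] using norm_snd_le (m - x₀)
    have hnormsq : ‖m - x₀‖^2 ≤ (m.1 - x₀.1) * (m.1 - x₀.1) + (m.2 - x₀.2) * (m.2 - x₀.2) := by
      have hn : ‖m - x₀‖ = max |m.1 - x₀.1| |m.2 - x₀.2| := by
        simp [Prod.norm_def, Real.norm_eq_abs]
      rw [hn]
      rcases max_cases |m.1 - x₀.1| |m.2 - x₀.2| with ⟨h, _⟩ | ⟨h, _⟩ <;> rw [h] <;>
        nlinarith [sq_abs (m.1 - x₀.1), sq_abs (m.2 - x₀.2), sq_nonneg (m.1 - x₀.1),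
          sq_nonneg (m.2 - x₀.2)]
    have hmle : ‖m - x₀‖ ≤ c * r := by
      have h5 := hwb m hmcb
      have h6 : Q m ≤ u m - u x₀ - D (m - x₀) := by
        simp only [hG] at hGm; linarith
      have h7 : u m - u x₀ - D (m - x₀) ≤ c * ‖m - x₀‖ := (abs_le.1 h5).2
      have hq : ‖m - x₀‖^2 * r⁻¹ ≤ c * ‖m - x₀‖ := by
        refine le_trans ?_ (h6.trans h7)
        rw [hQ]
        have := mul_le_mul_of_nonneg_right hnormsq (by positivity : (0:ℝ) ≤ r⁻¹)
        exact this
      rcases eq_or_lt_of_le (norm_nonneg (m - x₀)) with h | h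
      · rw [← h]; positivity
      · have h8 : ‖m - x₀‖^2 ≤ c * ‖m - x₀‖ * r := by
          rw [← mul_le_mul_iff_of_pos_right (by positivity : (0:ℝ) < r⁻¹)]
          calc ‖m - x₀‖^2 * r⁻¹ ≤ c * ‖m - x₀‖ := hq
            _ = c * ‖m - x₀‖ * r * r⁻¹ := by field_simp
        nlinarith
    have hmint : m ∈ Metric.ball x₀ r := by
      rw [Metric.mem_ball, dist_eq_norm]
      calc ‖m - x₀‖ ≤ c * r := hmle
        _ < 1 * r := by nlinarith
        _ = r := one_mul r
    set φ : ℝ × ℝ → ℝ := fun x => u x₀ + D (x - x₀) + Q x + G m with hφ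
    have hφm : φ m = u m := by simp only [hφ, hG]; ring
    have hφu : ∀ x ∈ Metric.ball x₀ r, u x ≤ φ x := by
      intro x hx
      have h9 := hmax (Metric.ball_subset_closedBall hx)
      simp only [Set.mem_setOf_eq, hG] at h9
      simp only [hφ, hG]
      linarith
    have hφcd : ContDiffOn ℝ 1 φ (Metric.ball x₀ r) := by
      apply ContDiff.contDiffOn
      have hDc : ContDiff ℝ 1 (fun x : ℝ × ℝ => D (x - x₀)) :=
        D.contDiff.comp (contDiff_id.sub contDiff_const)
      simp only [hφ, hQ]
      fun_prop
    set e₁ : ℝ := (m.1 - x₀.1 + (m.1 - x₀.1)) * r⁻¹ with he₁def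
    set e₂ : ℝ := (m.2 - x₀.2 + (m.2 - x₀.2)) * r⁻¹ with he₂def
    set Dφ : (ℝ × ℝ) →L[ℝ] ℝ := D + e₁ • ContinuousLinearMap.fst ℝ ℝ ℝ
        + e₂ • ContinuousLinearMap.snd ℝ ℝ ℝ with hDφ
    have hder : HasFDerivAt φ Dφ m := by
      have h1 : HasFDerivAt (fun x : ℝ × ℝ => D (x - x₀)) D m := by
        have heq : (fun x : ℝ × ℝ => D (x - x₀)) = fun x => D x - D x₀ := by
          funext x; rw [map_sub]
        rw [heq]
        exact D.hasFDerivAt.sub_const (D x₀)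
      have h2 : HasFDerivAt (fun x : ℝ × ℝ => x.1 - x₀.1) (ContinuousLinearMap.fst ℝ ℝ ℝ) m :=
        hasFDerivAt_fst.sub_const x₀.1
      have h3 : HasFDerivAt (fun x : ℝ × ℝ => x.2 - x₀.2) (ContinuousLinearMap.snd ℝ ℝ ℝ) m :=
        hasFDerivAt_snd.sub_const x₀.2
      have h4 := ((h2.mul h2).add (h3.mul h3)).mul_const r⁻¹
      have h6 := ((h1.add h4).add_const (G m)).const_add (u x₀)
      have h7 : HasFDerivAt φ (D + r⁻¹ • ((m.1 - x₀.1) • ContinuousLinearMap.fst ℝ ℝ ℝ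
          + (m.1 - x₀.1) • ContinuousLinearMap.fst ℝ ℝ ℝ
          + ((m.2 - x₀.2) • ContinuousLinearMap.snd ℝ ℝ ℝ
          + (m.2 - x₀.2) • ContinuousLinearMap.snd ℝ ℝ ℝ))) m := by
        have heq2 : φ = fun x => u x₀ + (D (x - x₀) + ((x.1 - x₀.1) * (x.1 - x₀.1)
            + (x.2 - x₀.2) * (x.2 - x₀.2)) * r⁻¹ + G m) := by
          funext x; simp only [hφ, hQ]; ring
        rw [heq2]
        exact h6
      have hDeq : (D + r⁻¹ • ((m.1 - x₀.1) • ContinuousLinearMap.fst ℝ ℝ ℝ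
          + (m.1 - x₀.1) • ContinuousLinearMap.fst ℝ ℝ ℝ
          + ((m.2 - x₀.2) • ContinuousLinearMap.snd ℝ ℝ ℝ
          + (m.2 - x₀.2) • ContinuousLinearMap.snd ℝ ℝ ℝ))) = Dφ := by
        apply ContinuousLinearMap.ext
        intro k
        simp only [hDφ, ContinuousLinearMap.add_apply, ContinuousLinearMap.smul_apply,
          ContinuousLinearMap.coe_fst', ContinuousLinearMap.coe_snd', smul_eq_mul,
          he₁def, he₂def]
        ring
      exact hDeq ▸ h7
    have hvb := hvisc.1 m (Set.mem_univ m) φ (Metric.ball x₀ r) Metric.isOpen_ball hmint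
      (Set.subset_univ _) hφcd hφm hφu
    rw [hder.fderiv] at hvb
    have hv1 : Dφ (1, 0) = a + e₁ := by
      rw [hDφ]
      simp [ha]
    have hv2 : Dφ (0, 1) = b + e₂ := by
      rw [hDφ]
      simp [hb]
    rw [hv1, hv2] at hvb
    refine ⟨e₁, e₂, ?_, ?_, hvb⟩
    · rw [he₁def]
      have h1' : |m.1 - x₀.1| ≤ c * r := le_trans hnorm1 hmle
      rw [abs_mul, abs_of_pos (by positivity : (0:ℝ) < r⁻¹)]
      have : |m.1 - x₀.1 + (m.1 - x₀.1)| ≤ 2 * (c * r) := by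
        calc |m.1 - x₀.1 + (m.1 - x₀.1)| ≤ |m.1 - x₀.1| + |m.1 - x₀.1| := abs_add_le _ _
          _ ≤ 2 * (c * r) := by linarith
      calc |m.1 - x₀.1 + (m.1 - x₀.1)| * r⁻¹ ≤ 2 * (c * r) * r⁻¹ := by
            apply mul_le_mul_of_nonneg_right this (by positivity)
        _ = 2 * c := by field_simp
        _ = ε^2/4 := by rw [hcdef]; ring
        _ ≤ ε := by nlinarith
    · rw [he₂def]
      have h2' : |m.2 - x₀.2| ≤ c * r := le_trans hnorm2 hmle
      rw [abs_mul, abs_of_pos (by positivity : (0:ℝ) < r⁻¹)]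
      have : |m.2 - x₀.2 + (m.2 - x₀.2)| ≤ 2 * (c * r) := by
        calc |m.2 - x₀.2 + (m.2 - x₀.2)| ≤ |m.2 - x₀.2| + |m.2 - x₀.2| := abs_add_le _ _
          _ ≤ 2 * (c * r) := by linarith
      calc |m.2 - x₀.2 + (m.2 - x₀.2)| * r⁻¹ ≤ 2 * (c * r) * r⁻¹ := by
            apply mul_le_mul_of_nonneg_right this (by positivity)
        _ = 2 * c := by field_simp
        _ = ε^2/4 := by rw [hcdef]; ring
        _ ≤ ε := by nlinarith
  -- conclude
  clear_value D a b
  by_contra hlt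
  push_neg at hlt
  set M : ℝ := 2 * (|a| + |b|) + 2 with hM
  have hMpos : 0 < M := by positivity
  set ε : ℝ := min 1 ((1 - (a^2 - b^2))/(2*M)) with hε
  have hεpos : 0 < ε := lt_min one_pos (div_pos (by linarith) (by positivity))
  have hε1 : ε ≤ 1 := min_le_left _ _
  have hεle : ε ≤ (1 - (a^2 - b^2))/(2*M) := min_le_right _ _
  clear_value ε M
  obtain ⟨e₁, e₂, he₁, he₂, hineq⟩ := claim ε hεpos hε1
  have hae : |a * e₁| ≤ |a| * ε := by
    rw [abs_mul]; exact mul_le_mul_of_nonneg_left he₁ (abs_nonneg a)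
  have hbe : |b * e₂| ≤ |b| * ε := by
    rw [abs_mul]; exact mul_le_mul_of_nonneg_left he₂ (abs_nonneg b)
  have he₁sq : e₁^2 ≤ ε^2 := by
    rcases abs_le.1 he₁ with ⟨l1, l2⟩; exact sq_le_sq' l1 l2
  have h1 : (a + e₁)^2 ≤ a^2 + 2 * |a| * ε + ε^2 := by
    nlinarith [le_abs_self (a * e₁), hae]
  have h2 : b^2 - 2 * |b| * ε ≤ (b + e₂)^2 := by
    nlinarith [neg_abs_le (b * e₂), hbe, sq_nonneg e₂]
  have hε2 : ε^2 ≤ ε := by nlinarith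
  have key : 1 ≤ a^2 - b^2 + M * ε := by rw [hM]; ring_nf; ring_nf at h1 h2 hineq hε2; linarith
  have hMε : M * ε ≤ (1 - (a^2 - b^2))/2 := by
    have h3 : M * ε ≤ M * ((1 - (a^2 - b^2))/(2*M)) :=
      mul_le_mul_of_nonneg_left hεle hMpos.le
    have hMne : M ≠ 0 := ne_of_gt hMpos
    have h4 : M * ((1 - (a^2 - b^2))/(2*M)) = (1 - (a^2 - b^2))/2 := by
      field_simp
    linarith
  linarith

lemma clm_decomp (L : (ℝ × ℝ) →L[ℝ] ℝ) (h : ℝ × ℝ) :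
    L h = h.1 * L (1, 0) + h.2 * L (0, 1) := by
  have hdec : h = h.1 • ((1:ℝ), (0:ℝ)) + h.2 • ((0:ℝ), (1:ℝ)) := by
    simp [Prod.ext_iff]
  calc L h = L (h.1 • ((1:ℝ), (0:ℝ)) + h.2 • ((0:ℝ), (1:ℝ))) := by rw [← hdec]
    _ = h.1 * L (1, 0) + h.2 * L (0, 1) := by
      rw [map_add, _root_.map_smul, _root_.map_smul]; simp

lemma grad_lower_aux (a b c h1 h2 : ℝ) (ha2 : 0 < a) (hab : 1 ≤ a^2 - b^2)
    (htl : |h2| < h1) (hc : c = Real.sqrt (h1^2 - h2^2)) :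
    c ≤ h1 * a + h2 * b := by
  have hh2 : h2^2 < h1^2 := by nlinarith [abs_nonneg h2, sq_abs h2, le_abs_self h2, neg_abs_le h2]
  have h1pos : 0 < h1 := lt_of_le_of_lt (abs_nonneg h2) htl
  have hcnn : 0 ≤ c := hc ▸ Real.sqrt_nonneg _
  have hc2 : c^2 = h1^2 - h2^2 := by rw [hc]; exact Real.sq_sqrt (by linarith)
  set s : ℝ := Real.sqrt (1 + b^2) with hs
  have hsnn : 0 ≤ s := Real.sqrt_nonneg _
  have hs2 : s^2 = 1 + b^2 := Real.sq_sqrt (by positivity)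
  have hsa : s ≤ a := by
    have : a = Real.sqrt (a^2) := (Real.sqrt_sq ha2.le).symm
    rw [this, hs]
    exact Real.sqrt_le_sqrt (by linarith)
  have hstep : c ≤ h1 * s + h2 * b := by
    rcases le_or_gt (c - h2 * b) 0 with hcase | hcase
    · nlinarith [mul_nonneg h1pos.le hsnn]
    · have hsq : (c - h2 * b)^2 ≤ (h1 * s)^2 := by nlinarith [sq_nonneg (c * b + h2)]
      nlinarith [mul_nonneg h1pos.le hsnn]
  have : h1 * s ≤ h1 * a := mul_le_mul_of_nonneg_left hsa h1pos.le
  linarith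

lemma grad_lower (u : ℝ × ℝ → ℝ) (hc : Continuous u)
    (hvisc : IsViscositySolution u Set.univ) (x : ℝ × ℝ)
    (hpastx : 0 < fderiv ℝ u x (1, 0)) (hd : DifferentiableAt ℝ u x)
    (h : ℝ × ℝ) (htl : |h.2| < h.1) :
    Real.sqrt (h.1^2 - h.2^2) ≤ fderiv ℝ u x h := by
  have hab := visc_diff_bound u hc hvisc x hd
  rw [clm_decomp]
  exact grad_lower_aux (fderiv ℝ u x (1, 0)) (fderiv ℝ u x (0, 1)) _ h.1 h.2 hpastx hab htl rfl


lemma lemmaR (u : ℝ × ℝ → ℝ) (hc : Continuous u)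
    (hvisc : IsViscositySolution u Set.univ)
    (hpast : ∀ q : ℝ × ℝ, DifferentiableAt ℝ u q → 0 < fderiv ℝ u q (1, 0))
    (q₀ : ℝ × ℝ) (R : ℝ) (hR : 0 < R) (K : NNReal)
    (hLip : LipschitzOnWith K u (Metric.ball q₀ R)) :
    ∀ z ∈ Metric.ball q₀ R, ∀ w ∈ Metric.ball q₀ R, |(w - z).2| < (w - z).1 →
      u z + Real.sqrt (((w - z).1)^2 - ((w - z).2)^2) ≤ u w := by
  obtain ⟨ub, hublip, hubeq⟩ := hLip.extend_real
  have hubc : Continuous ub := hublip.continuous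
  have hnull : volume {x : ℝ × ℝ | ¬ DifferentiableAt ℝ ub x} = 0 := by
    have := hublip.ae_differentiableAt (μ := (volume : Measure (ℝ × ℝ)))
    rwa [ae_iff] at this
  obtain ⟨N, hNsub, hNm, hN0⟩ := exists_measurable_superset_of_null hnull
  intro z hz w hw htl
  set h : ℝ × ℝ := w - z with hh
  set c : ℝ := Real.sqrt ((h.1)^2 - (h.2)^2) with hcdef
  -- the inequality at good basepoints
  have good : ∀ z' ∈ Metric.ball q₀ R, z' + h ∈ Metric.ball q₀ R →
      (∀ᵐ s : ℝ, z' + s • h ∉ N) → u z' + c ≤ u (z' + h) := by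
    intro z' hz' hz'h hae
    set g : ℝ → ℝ := fun s => ub (z' + s • h) with hg
    have hline : LipschitzWith ‖h‖₊ (fun s : ℝ => z' + s • h) := by
      apply LipschitzWith.of_dist_le_mul
      intro s t
      rw [dist_eq_norm, dist_eq_norm]
      have : z' + s • h - (z' + t • h) = (s - t) • h := by
        rw [sub_smul]; abel
      rw [this, norm_smul, Real.norm_eq_abs]
      exact le_of_eq (by rw [coe_nnnorm]; ring)
    have hgl : LipschitzWith (K * ‖h‖₊) g := hublip.comp hline
    have hgc : Continuous g := hgl.continuous
    have hseg : ∀ s : ℝ, s ∈ Set.Icc (0:ℝ) 1 → z' + s • h ∈ Metric.ball q₀ R := by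
      intro s hs
      have hcomb := (convex_ball q₀ R) hz' hz'h (by linarith [hs.2] : (0:ℝ) ≤ 1 - s) hs.1
        (by ring : (1 - s) + s = 1)
      have : (1 - s) • z' + s • (z' + h) = z' + s • h := by
        rw [smul_add, sub_smul, one_smul]; abel
      rwa [this] at hcomb
    have hder : ∀ᵐ s : ℝ, s ∈ Set.Ioo (0:ℝ) 1 → DifferentiableAt ℝ g s ∧ c ≤ deriv g s := by
      filter_upwards [hae] with s hsN hsIoo
      set x : ℝ × ℝ := z' + s • h with hx
      have hxball : x ∈ Metric.ball q₀ R := hseg s ⟨hsIoo.1.le, hsIoo.2.le⟩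
      have hdub : DifferentiableAt ℝ ub x := by
        by_contra hcon
        exact hsN (hNsub hcon)
      have hloc : u =ᶠ[nhds x] ub :=
        Filter.eventuallyEq_of_mem (Metric.isOpen_ball.mem_nhds hxball) hubeq
      have hdu : DifferentiableAt ℝ u x := (hloc.differentiableAt_iff).2 hdub
      have hfd : fderiv ℝ u x = fderiv ℝ ub x := hloc.fderiv_eq
      have hlinder : HasDerivAt (fun s : ℝ => z' + s • h) h s := by
        have h1 : HasDerivAt (fun s : ℝ => s • h) h s := by
          simpa using (hasDerivAt_id s).smul_const h
        simpa using h1.const_add z'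
      have hgd : HasDerivAt g (fderiv ℝ ub x h) s :=
        (hdub.hasFDerivAt.comp_hasDerivAt s hlinder)
      refine ⟨hgd.differentiableAt, ?_⟩
      rw [hgd.deriv, ← hfd]
      exact grad_lower u hc hvisc x (hpast x hdu) hdu h htl
    have := one_dim g hgc (K * ‖h‖₊) (hgl.lipschitzOnWith (s := Set.Icc (0:ℝ) 2)) c hder
    have hg1 : g 1 = u (z' + h) := by
      rw [hg]; simp only [one_smul]
      exact (hubeq hz'h).symm
    have hg0 : g 0 = u z' := by
      rw [hg]; simp only [zero_smul, add_zero]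
      exact (hubeq hz').symm
    rw [hg1, hg0] at this
    linarith
  -- continuity and density
  have hzw : z + h = w := by rw [hh]; abel
  apply le_of_forall_pos_le_add
  intro η hη
  have hcz : ContinuousAt u z := hc.continuousAt
  have hcw : ContinuousAt (fun y : ℝ × ℝ => u (y + h)) z :=
    (hc.comp (continuous_id.add continuous_const)).continuousAt
  rw [Metric.continuousAt_iff] at hcz hcw
  obtain ⟨δ₁, hδ₁, hball₁⟩ := hcz (η/2) (by linarith)
  obtain ⟨δ₂, hδ₂, hball₂⟩ := hcw (η/2) (by linarith)
  set δ₃ : ℝ := R - dist z q₀ with hδ₃def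
  have hδ₃ : 0 < δ₃ := by rw [hδ₃def]; exact sub_pos.2 (Metric.mem_ball.1 hz)
  set δ₄ : ℝ := R - dist w q₀ with hδ₄def
  have hδ₄ : 0 < δ₄ := by rw [hδ₄def]; exact sub_pos.2 (Metric.mem_ball.1 hw)
  set δ : ℝ := min (min δ₁ δ₂) (min δ₃ δ₄) with hδdef
  have hδ : 0 < δ := lt_min (lt_min hδ₁ hδ₂) (lt_min hδ₃ hδ₄)
  -- find a good z' in ball z δ
  have hexists : ∃ z' ∈ Metric.ball z δ, ∀ᵐ s : ℝ, z' + s • h ∉ N := by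
    by_contra hno
    push_neg at hno
    have haeG := ae_ae_line N hNm hN0 h
    have h0 : volume {z' : ℝ × ℝ | ¬ ∀ᵐ s : ℝ, z' + s • h ∉ N} = 0 := ae_iff.1 haeG
    have hsub : Metric.ball z δ ⊆ {z' : ℝ × ℝ | ¬ ∀ᵐ s : ℝ, z' + s • h ∉ N} :=
      fun y hy => hno y hy
    have h1 := (measure_mono hsub).trans_eq h0
    exact (Metric.measure_ball_pos volume z hδ).ne' (le_antisymm h1 zero_le)
  obtain ⟨z', hz'd, hz'ae⟩ := hexists
  have hdz'z : dist z' z < δ := Metric.mem_ball.1 hz'd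
  have hz'ball : z' ∈ Metric.ball q₀ R := by
    rw [Metric.mem_ball]
    calc dist z' q₀ ≤ dist z' z + dist z q₀ := dist_triangle _ _ _
      _ < δ₃ + dist z q₀ := by
          have : δ ≤ δ₃ := le_trans (min_le_right _ _) (min_le_left _ _)
          linarith
      _ = R := by rw [hδ₃def]; ring
  have hz'hball : z' + h ∈ Metric.ball q₀ R := by
    rw [Metric.mem_ball]
    have hd1 : dist (z' + h) w = dist z' z := by
      rw [← hzw, dist_add_right]
    calc dist (z' + h) q₀ ≤ dist (z' + h) w + dist w q₀ := dist_triangle _ _ _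
      _ < δ₄ + dist w q₀ := by
          have : δ ≤ δ₄ := le_trans (min_le_right _ _) (min_le_right _ _)
          rw [hd1]; linarith
      _ = R := by rw [hδ₄def]; ring
  have hmain := good z' hz'ball hz'hball hz'ae
  have he1 : |u z' - u z| < η/2 := by
    have := hball₁ (lt_of_lt_of_le hdz'z (le_trans (min_le_left _ _) (min_le_left _ _)))
    rwa [Real.dist_eq] at this
  have he2 : |u (z' + h) - u w| < η/2 := by
    have := hball₂ (lt_of_lt_of_le hdz'z (le_trans (min_le_left _ _) (min_le_right _ _)))
    rw [Real.dist_eq] at this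
    rwa [hzw] at this
  have ha1 := abs_lt.1 he1
  have ha2 := abs_lt.1 he2
  linarith [ha1.1, ha1.2, ha2.1, ha2.2]


set_option maxHeartbeats 1000000 in
/-- Let `u` be a locally Lipschitz viscosity solution of the Lorentzian eikonal
equation on 2-dimensional Minkowski space-time with past-directed time orientation.
If `v = (v₁, v₂)` with `v₁ = √(1 + v₂²)` is a future-directed unit timelike vector and
`u(p + t·v) = u(p) + t` for all `t ∈ [0, T]` (`T > 0`), then for every `t ∈ (0, T)`,
`u` is differentiable at `p + t·v` with `∂u/∂x(p + t·v) = v₁` and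
`∂u/∂y(p + t·v) = -v₂`, i.e. the Lorentzian gradient satisfies `∇u(p + t·v) = -v`. -/
theorem differentiable_along_calibrated_curve
    (u : ℝ × ℝ → ℝ) (hLip : LocallyLipschitz u)
    (hvisc : IsViscositySolution u Set.univ)
    (hpast : ∀ q : ℝ × ℝ, DifferentiableAt ℝ u q → 0 < fderiv ℝ u q (1, 0))
    (p : ℝ × ℝ) (T : ℝ) (hT : 0 < T) (v : ℝ × ℝ)
    (hv : v.1 = Real.sqrt (1 + v.2 ^ 2))
    (hcal : ∀ t ∈ Set.Icc (0:ℝ) T, u (p + t • v) = u p + t) :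
    ∀ t ∈ Set.Ioo (0:ℝ) T, DifferentiableAt ℝ u (p + t • v) ∧
      fderiv ℝ u (p + t • v) (1, 0) = v.1 ∧
      fderiv ℝ u (p + t • v) (0, 1) = -v.2 := by
  intro t ht
  obtain ⟨ht0, htT⟩ := ht
  set q : ℝ × ℝ := p + t • v with hq
  have hcont : Continuous u := hLip.continuous
  -- facts about v
  have hv2 : v.1^2 = 1 + v.2^2 := by rw [hv]; exact Real.sq_sqrt (by positivity)
  have hv1pos : 0 < v.1 := by rw [hv]; exact Real.sqrt_pos.2 (by positivity)
  have habs : |v.2| < v.1 := by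
    nlinarith [abs_nonneg v.2, sq_abs v.2]
  -- Lipschitz ball around q
  obtain ⟨K, tset, htset, hKlip⟩ := hLip q
  obtain ⟨R, hRpos, hRsub⟩ := Metric.mem_nhds_iff.1 htset
  have hLipB : LipschitzOnWith K u (Metric.ball q R) := hKlip.mono hRsub
  have hlemR := lemmaR u hcont hvisc hpast q R hRpos K hLipB
  -- choose parameters
  set γ : ℝ := v.1 - |v.2| with hγ
  have hγpos : 0 < γ := sub_pos.2 habs
  set s : ℝ := min (min t (T - t)) (R/(4*(‖v‖+1))) with hs
  have hspos : 0 < s := lt_min (lt_min ht0 (by linarith)) (by positivity)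
  have hst : s ≤ t := le_trans (min_le_left _ _) (min_le_left _ _)
  have hsT : s ≤ T - t := le_trans (min_le_left _ _) (min_le_right _ _)
  have hsv : s * ‖v‖ < R/2 := by
    have h1 : s ≤ R/(4*(‖v‖+1)) := min_le_right _ _
    have h2 : 0 ≤ ‖v‖ := norm_nonneg v
    have h3 : s * ‖v‖ ≤ R/(4*(‖v‖+1)) * ‖v‖ := mul_le_mul_of_nonneg_right h1 h2
    have h4 : R/(4*(‖v‖+1)) * ‖v‖ < R/2 := by
      rw [div_mul_eq_mul_div, div_lt_div_iff₀ (by positivity) (by norm_num)]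
      nlinarith
    linarith
  set ρ : ℝ := min (s*γ/4) (R/4) with hρ
  have hρpos : 0 < ρ := lt_min (by positivity) (by positivity)
  have hργ : ρ ≤ s*γ/4 := min_le_left _ _
  have hρR : ρ ≤ R/4 := min_le_right _ _
  -- calibration values
  have hvnorm1 : |v.1| ≤ ‖v‖ := by
    simpa [Real.norm_eq_abs] using norm_fst_le v
  have hvnorm2 : |v.2| ≤ ‖v‖ := by
    simpa [Real.norm_eq_abs] using norm_snd_le v
  have huq : u q = u p + t := hcal t ⟨ht0.le, htT.le⟩
  have huminus : u (q - s • v) = u q - s := by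
    have h1 : q - s • v = p + (t - s) • v := by rw [hq, sub_smul]; abel
    rw [h1, hcal (t - s) ⟨by linarith, by linarith⟩, huq]; ring
  have huplus : u (q + s • v) = u q + s := by
    have h1 : q + s • v = p + (t + s) • v := by rw [hq, add_smul]; abel
    rw [h1, hcal (t + s) ⟨by linarith, by linarith⟩, huq]; ring
  -- ball memberships
  have hsvnorm : ‖s • v‖ < R/2 := by
    rw [norm_smul, Real.norm_eq_abs, abs_of_pos hspos]; exact hsv
  have hzball : q - s • v ∈ Metric.ball q R := by
    rw [Metric.mem_ball, dist_eq_norm]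
    have : q - s • v - q = -(s • v) := by abel
    rw [this, norm_neg]; linarith
  have hz'ball : q + s • v ∈ Metric.ball q R := by
    rw [Metric.mem_ball, dist_eq_norm]
    have : q + s • v - q = s • v := by abel
    rw [this]; linarith
  -- two-sided bound near q
  have hbound : ∀ w ∈ Metric.ball q ρ,
      u q - s + Real.sqrt ((w.1 - (q.1 - s*v.1))^2 - (w.2 - (q.2 - s*v.2))^2) ≤ u w ∧
      u w ≤ u q + s - Real.sqrt ((q.1 + s*v.1 - w.1)^2 - (q.2 + s*v.2 - w.2)^2) := by
    intro w hw
    have hwq : dist w q < ρ := Metric.mem_ball.1 hw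
    have hw1 : |w.1 - q.1| < ρ := by
      have := norm_fst_le (w - q)
      rw [dist_eq_norm] at hwq
      simp only [Prod.fst_sub, Real.norm_eq_abs] at this
      linarith
    have hw2 : |w.2 - q.2| < ρ := by
      have := norm_snd_le (w - q)
      rw [dist_eq_norm] at hwq
      simp only [Prod.snd_sub, Real.norm_eq_abs] at this
      linarith
    have hwball : w ∈ Metric.ball q R := by
      rw [Metric.mem_ball]
      calc dist w q < ρ := hwq
        _ ≤ R/4 := hρR
        _ < R := by linarith
    have habs1 := abs_lt.1 hw1
    have habs2 := abs_lt.1 hw2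
    have habsv2 := abs_le.1 (le_of_lt habs)
    constructor
    · -- lower bound via z = q - s•v
      have htl : |(w - (q - s • v)).2| < (w - (q - s • v)).1 := by
        have he1 : (w - (q - s • v)).1 = w.1 - q.1 + s * v.1 := by
          simp [Prod.fst_sub, Prod.smul_fst, smul_eq_mul]; ring
        have he2 : (w - (q - s • v)).2 = w.2 - q.2 + s * v.2 := by
          simp [Prod.snd_sub, Prod.smul_snd, smul_eq_mul]; ring
        rw [he1, he2]
        rw [abs_lt]
        constructor
        · nlinarith [neg_abs_le v.2]
        · nlinarith [le_abs_self v.2]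
      have := hlemR (q - s • v) hzball w hwball htl
      rw [huminus] at this
      have he1 : (w - (q - s • v)).1 = w.1 - (q.1 - s*v.1) := by
        simp [Prod.fst_sub, Prod.smul_fst, smul_eq_mul]
      have he2 : (w - (q - s • v)).2 = w.2 - (q.2 - s*v.2) := by
        simp [Prod.snd_sub, Prod.smul_snd, smul_eq_mul]
      rw [he1, he2] at this
      linarith
    · -- upper bound via z = w, w' = q + s•v
      have htl : |(q + s • v - w).2| < (q + s • v - w).1 := by
        have he1 : (q + s • v - w).1 = q.1 + s * v.1 - w.1 := by
          simp [Prod.fst_sub, Prod.fst_add, Prod.smul_fst, smul_eq_mul]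
        have he2 : (q + s • v - w).2 = q.2 + s * v.2 - w.2 := by
          simp [Prod.snd_sub, Prod.snd_add, Prod.smul_snd, smul_eq_mul]
        rw [he1, he2]
        rw [abs_lt]
        constructor
        · nlinarith [neg_abs_le v.2]
        · nlinarith [le_abs_self v.2]
      have := hlemR w hwball (q + s • v) hz'ball htl
      rw [huplus] at this
      have he1 : (q + s • v - w).1 = q.1 + s*v.1 - w.1 := by
        simp [Prod.fst_sub, Prod.fst_add, Prod.smul_fst, smul_eq_mul]
      have he2 : (q + s • v - w).2 = q.2 + s*v.2 - w.2 := by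
        simp [Prod.snd_sub, Prod.snd_add, Prod.smul_snd, smul_eq_mul]
      rw [he1, he2] at this
      linarith
  -- candidate derivative
  set P : (ℝ × ℝ) →L[ℝ] ℝ := v.1 • ContinuousLinearMap.fst ℝ ℝ ℝ
      - v.2 • ContinuousLinearMap.snd ℝ ℝ ℝ with hP
  have hPapp : ∀ k : ℝ × ℝ, P k = v.1 * k.1 - v.2 * k.2 := by
    intro k
    simp [hP, ContinuousLinearMap.sub_apply, ContinuousLinearMap.smul_apply,
      ContinuousLinearMap.coe_fst', ContinuousLinearMap.coe_snd', smul_eq_mul]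
  set ψm : ℝ × ℝ → ℝ := fun w => (w.1 - (q.1 - s*v.1))^2 - (w.2 - (q.2 - s*v.2))^2 with hψm
  set ψp : ℝ × ℝ → ℝ := fun w => (q.1 + s*v.1 - w.1)^2 - (q.2 + s*v.2 - w.2)^2 with hψp
  have hψmq : ψm q = s^2 := by
    simp only [hψm]
    linear_combination s^2 * hv2
  have hψpq : ψp q = s^2 := by
    simp only [hψp]
    linear_combination s^2 * hv2
  have hsqrts : Real.sqrt (s^2) = s := Real.sqrt_sq hspos.le
  have hψmqpos : ψm q ≠ 0 := by rw [hψmq]; positivity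
  have hψpqpos : ψp q ≠ 0 := by rw [hψpq]; positivity
  -- derivative of ψm at q
  have hfm1 : HasFDerivAt (fun w : ℝ × ℝ => w.1 - (q.1 - s*v.1))
      (ContinuousLinearMap.fst ℝ ℝ ℝ) q := hasFDerivAt_fst.sub_const _
  have hfm2 : HasFDerivAt (fun w : ℝ × ℝ => w.2 - (q.2 - s*v.2))
      (ContinuousLinearMap.snd ℝ ℝ ℝ) q := hasFDerivAt_snd.sub_const _
  have hm : HasFDerivAt ψm
      (((q.1 - (q.1 - s*v.1)) • ContinuousLinearMap.fst ℝ ℝ ℝ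
        + (q.1 - (q.1 - s*v.1)) • ContinuousLinearMap.fst ℝ ℝ ℝ)
       - ((q.2 - (q.2 - s*v.2)) • ContinuousLinearMap.snd ℝ ℝ ℝ
        + (q.2 - (q.2 - s*v.2)) • ContinuousLinearMap.snd ℝ ℝ ℝ)) q := by
    have heq : ψm = fun w : ℝ × ℝ => (w.1 - (q.1 - s*v.1)) * (w.1 - (q.1 - s*v.1))
        - (w.2 - (q.2 - s*v.2)) * (w.2 - (q.2 - s*v.2)) := by
      funext w; simp only [hψm]; ring
    rw [heq]
    exact (hfm1.mul hfm1).sub (hfm2.mul hfm2)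
  have hfp1 : HasFDerivAt (fun w : ℝ × ℝ => q.1 + s*v.1 - w.1)
      ((0:(ℝ × ℝ) →L[ℝ] ℝ) - ContinuousLinearMap.fst ℝ ℝ ℝ) q :=
    (hasFDerivAt_const (q.1 + s*v.1) q).sub hasFDerivAt_fst
  have hfp2 : HasFDerivAt (fun w : ℝ × ℝ => q.2 + s*v.2 - w.2)
      ((0:(ℝ × ℝ) →L[ℝ] ℝ) - ContinuousLinearMap.snd ℝ ℝ ℝ) q :=
    (hasFDerivAt_const (q.2 + s*v.2) q).sub hasFDerivAt_snd
  have hpd : HasFDerivAt ψp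
      (((q.1 + s*v.1 - q.1) • ((0:(ℝ × ℝ) →L[ℝ] ℝ) - ContinuousLinearMap.fst ℝ ℝ ℝ)
        + (q.1 + s*v.1 - q.1) • ((0:(ℝ × ℝ) →L[ℝ] ℝ) - ContinuousLinearMap.fst ℝ ℝ ℝ))
       - ((q.2 + s*v.2 - q.2) • ((0:(ℝ × ℝ) →L[ℝ] ℝ) - ContinuousLinearMap.snd ℝ ℝ ℝ)
        + (q.2 + s*v.2 - q.2) • ((0:(ℝ × ℝ) →L[ℝ] ℝ) - ContinuousLinearMap.snd ℝ ℝ ℝ))) q := by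
    have heq : ψp = fun w : ℝ × ℝ => (q.1 + s*v.1 - w.1) * (q.1 + s*v.1 - w.1)
        - (q.2 + s*v.2 - w.2) * (q.2 + s*v.2 - w.2) := by
      funext w; simp only [hψp]; ring
    rw [heq]
    exact (hfp1.mul hfp1).sub (hfp2.mul hfp2)
  -- derivative of Fm and Fp
  set Fm : ℝ × ℝ → ℝ := fun w => u q - s + Real.sqrt (ψm w) with hFm
  set Fp : ℝ × ℝ → ℝ := fun w => u q + s - Real.sqrt (ψp w) with hFp
  have hFmq : Fm q = u q := by rw [hFm]; simp only; rw [hψmq, hsqrts]; ring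
  have hFpq : Fp q = u q := by rw [hFp]; simp only; rw [hψpq, hsqrts]; ring
  have hFmd : HasFDerivAt Fm P q := by
    have hsqrt := (Real.hasDerivAt_sqrt hψmqpos).comp_hasFDerivAt q hm
    rw [hψmq, hsqrts] at hsqrt
    have hsum := hsqrt.const_add (u q - s)
    have hPeq : (1 / (2*s)) • (((q.1 - (q.1 - s*v.1)) • ContinuousLinearMap.fst ℝ ℝ ℝ
        + (q.1 - (q.1 - s*v.1)) • ContinuousLinearMap.fst ℝ ℝ ℝ)
       - ((q.2 - (q.2 - s*v.2)) • ContinuousLinearMap.snd ℝ ℝ ℝ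
        + (q.2 - (q.2 - s*v.2)) • ContinuousLinearMap.snd ℝ ℝ ℝ)) = P := by
      apply ContinuousLinearMap.ext
      intro k
      simp only [hP, ContinuousLinearMap.smul_apply, ContinuousLinearMap.sub_apply,
        ContinuousLinearMap.add_apply, ContinuousLinearMap.coe_fst',
        ContinuousLinearMap.coe_snd', smul_eq_mul]
      field_simp
      ring
    rw [hPeq] at hsum
    exact hsum
  have hFpd : HasFDerivAt Fp P q := by
    have hsqrt := (Real.hasDerivAt_sqrt hψpqpos).comp_hasFDerivAt q hpd
    rw [hψpq, hsqrts] at hsqrt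
    have hsum := (hsqrt.const_sub (u q + s))
    have hPeq2 : -((1 / (2*s)) • (((q.1 + s*v.1 - q.1) • ((0:(ℝ × ℝ) →L[ℝ] ℝ) - ContinuousLinearMap.fst ℝ ℝ ℝ)
        + (q.1 + s*v.1 - q.1) • ((0:(ℝ × ℝ) →L[ℝ] ℝ) - ContinuousLinearMap.fst ℝ ℝ ℝ))
       - ((q.2 + s*v.2 - q.2) • ((0:(ℝ × ℝ) →L[ℝ] ℝ) - ContinuousLinearMap.snd ℝ ℝ ℝ)
        + (q.2 + s*v.2 - q.2) • ((0:(ℝ × ℝ) →L[ℝ] ℝ) - ContinuousLinearMap.snd ℝ ℝ ℝ)))) = P := by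
      apply ContinuousLinearMap.ext
      intro k
      simp only [hP, ContinuousLinearMap.neg_apply, ContinuousLinearMap.smul_apply,
        ContinuousLinearMap.sub_apply, ContinuousLinearMap.add_apply,
        ContinuousLinearMap.coe_fst', ContinuousLinearMap.coe_snd',
        ContinuousLinearMap.zero_apply, smul_eq_mul]
      field_simp
      ring
    rw [hPeq2] at hsum
    simpa [Function.comp, hFp] using hsum
  -- squeeze
  have hudiff : HasFDerivAt u P q := by
    rw [hasFDerivAt_iff_isLittleO_nhds_zero] at hFmd hFpd ⊢
    rw [Asymptotics.isLittleO_iff] at hFmd hFpd ⊢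
    intro ε hε
    have hball : Metric.ball q ρ ∈ 𝓝 q := Metric.ball_mem_nhds q hρpos
    have hball0 : {k : ℝ × ℝ | q + k ∈ Metric.ball q ρ} ∈ 𝓝 (0 : ℝ × ℝ) := by
      have h0 : Metric.ball q ρ ∈ 𝓝 (q + (0:ℝ×ℝ)) := by rw [add_zero]; exact hball
      exact (continuous_const.add continuous_id).continuousAt.preimage_mem_nhds h0
    filter_upwards [hFmd hε, hFpd hε, hball0] with k h1 h2 h3
    have hFmb := (hbound (q + k) h3).1
    have hFpb := (hbound (q + k) h3).2
    have hm1 : Fm (q + k) = u q - s + Real.sqrt (ψm (q + k)) := rfl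
    have habs1 := abs_le.1 (by simpa [Real.norm_eq_abs] using h1 :
      |Fm (q + k) - Fm q - P k| ≤ ε * ‖k‖)
    have habs2 := abs_le.1 (by simpa [Real.norm_eq_abs] using h2 :
      |Fp (q + k) - Fp q - P k| ≤ ε * ‖k‖)
    rw [Real.norm_eq_abs, abs_le]
    have hlow : Fm (q + k) ≤ u (q + k) := by
      rw [hFm]; exact hFmb
    have hhigh : u (q + k) ≤ Fp (q + k) := by
      rw [hFp]; exact hFpb
    rw [hFmq] at habs1
    rw [hFpq] at habs2
    constructor
    · linarith [habs1.1]
    · linarith [habs2.2]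
  refine ⟨hudiff.differentiableAt, ?_, ?_⟩
  · rw [hudiff.fderiv, hPapp]
    norm_num
  · rw [hudiff.fderiv, hPapp]
    norm_num
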